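/- Let f = (f_1,...,f_c) be polynomials in variables (x,y) with c ≤ n + k (x of length n, y of length k) such that Jac f has rank c at every zero, so V = Z(f) is smooth equidimensional of codimension c. Let C' be a connected component of V ∩ R^{n+k} and suppose β is in the boundary of π_1(C'), where π_1(x,y) = x_1. Then every point (x,y) ∈ C' with x_1 = β is a critical point of the restriction of π_1 to V, i.e., the matrix obtained by appending the row e_1 = (1,0,...,0) to Jac f(x,y) has rank ≤ c. -/

import Mathlib

open MvPolynomial

/-- Complex Jacobian matrix of a real polynomial system at a complex point. -/
noncomputable def polyJacobianC (N c : ℕ) (f : Fin c → MvPolynomial (Fin N) ℝ)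
    (x : Fin N → ℂ) : Matrix (Fin c) (Fin N) ℂ :=
  fun i j => aeval x (pderiv j (f i))

/-- Real Jacobian of `f` augmented by the row `e₁ = (1, 0, …, 0)`. -/
noncomputable def polyJacobianAugR (N c : ℕ) (hN : 0 < N)
    (f : Fin c → MvPolynomial (Fin N) ℝ) (x : Fin N → ℝ) :
    Matrix (Fin (c + 1)) (Fin N) ℝ :=
  fun i j =>
    if hi : i.1 < c then eval x (pderiv j (f ⟨i.1, hi⟩)) else if j = ⟨0, hN⟩ then 1 else 0

noncomputable def evalDerivCLM {N : ℕ} (p : MvPolynomial (Fin N) ℝ) (x : Fin N → ℝ) :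
    (Fin N → ℝ) →L[ℝ] ℝ :=
  ∑ j, eval x (pderiv j p) • (ContinuousLinearMap.proj j : (Fin N → ℝ) →L[ℝ] ℝ)

lemma evalDerivCLM_apply {N : ℕ} (p : MvPolynomial (Fin N) ℝ) (x v : Fin N → ℝ) :
    evalDerivCLM p x v = ∑ j, eval x (pderiv j p) * v j := by
  simp [evalDerivCLM, ContinuousLinearMap.sum_apply]

lemma hasStrictFDerivAt_mvpoly {N : ℕ} (p : MvPolynomial (Fin N) ℝ) (x : Fin N → ℝ) :
    HasStrictFDerivAt (fun y => eval y p) (evalDerivCLM p x) x := by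
  induction p using MvPolynomial.induction_on with
  | C a =>
      have h : evalDerivCLM (C a : MvPolynomial (Fin N) ℝ) x = 0 := by
        ext v; simp [evalDerivCLM_apply]
      rw [h]
      simp only [eval_C]
      exact hasStrictFDerivAt_const a x
  | add p q hp hq =>
      have h : evalDerivCLM (p + q) x = evalDerivCLM p x + evalDerivCLM q x := by
        ext v; simp [evalDerivCLM_apply, add_mul, Finset.sum_add_distrib]
      rw [h]
      simp only [map_add]
      exact hp.add hq
  | mul_X p i hp =>
      have hX := hasStrictFDerivAt_apply (𝕜 := ℝ) (F' := fun _ : Fin N => ℝ) i x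
      have h := hp.mul hX
      simp only [map_mul, eval_X]
      refine h.congr_fderiv ?_
      symm
      ext v
      simp only [evalDerivCLM_apply, pderiv_mul, pderiv_X, map_add, map_mul, eval_X,
        ContinuousLinearMap.add_apply, ContinuousLinearMap.coe_smul', Pi.smul_apply,
        ContinuousLinearMap.proj_apply, smul_eq_mul]
      simp only [Pi.single_apply, apply_ite (eval x), map_one, map_zero, mul_ite, mul_one,
        mul_zero, add_mul, ite_mul, zero_mul]
      rw [Finset.sum_add_distrib, Finset.sum_ite_eq, if_pos (Finset.mem_univ i), Finset.mul_sum]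
      simp [mul_comm, mul_left_comm, mul_assoc, add_comm]

/-- Let `f = (f_1, …, f_c)` be polynomials in variables `(x, y)`
(`x` of length `n`, `y` of length `k`, `c ≤ n + k`) such that `Jac f` has rank `c`
at every zero, so `V = Z(f)` is smooth and equidimensional of codimension `c`.
Let `C'` be a connected component of `V ∩ ℝ^{n+k}` and suppose `β` lies in the
boundary of `π₁(C')`, where `π₁(x, y) = x₁`.  Then every point `(x, y) ∈ C'` with
`x₁ = β` is a critical point of the restriction of `π₁` to `V`: the matrix obtained
by appending the row `e₁ = (1, 0, …, 0)` to `Jac f(x, y)` has rank at most `c`. -/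
theorem boundary_points_are_critical (n k c : ℕ) (hc : c ≤ n + k) (h0 : 0 < n + k)
    (f : Fin c → MvPolynomial (Fin (n + k)) ℝ)
    (hreg : ∀ x : Fin (n + k) → ℂ, (∀ i, aeval x (f i) = 0) →
      (polyJacobianC (n + k) c f x).rank = c)
    (Z : Set (Fin (n + k) → ℝ)) (hZ : Z = {x | ∀ i, eval x (f i) = 0})
    (z : Fin (n + k) → ℝ) (hz : z ∈ Z)
    (C' : Set (Fin (n + k) → ℝ)) (hC' : C' = connectedComponentIn Z z)
    (β : ℝ) (hβ : β ∈ frontier ((fun x => x ⟨0, h0⟩) '' C')) :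
    ∀ x ∈ C', x ⟨0, h0⟩ = β →
      (polyJacobianAugR (n + k) c h0 f x).rank ≤ c := by
  intro x hx hx1
  by_contra hcon
  push_neg at hcon
  set M : Matrix (Fin (c+1)) (Fin (n+k)) ℝ := polyJacobianAugR (n+k) c h0 f x with hM
  have hMij : ∀ i j, M i j = if hi : i.1 < c then eval x (pderiv j (f ⟨i.1, hi⟩)) else
      if j = ⟨0, h0⟩ then 1 else 0 := fun i j => rfl
  -- the map and its derivative
  set G : (Fin (n+k) → ℝ) → (Fin (c+1) → ℝ) :=
    fun y i => if h : i.1 < c then eval y (f ⟨i.1, h⟩) else y ⟨0, h0⟩ with hGdef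
  set G' : (Fin (n+k) → ℝ) →L[ℝ] (Fin (c+1) → ℝ) :=
    LinearMap.toContinuousLinearMap M.mulVecLin with hG'def
  have hG'apply : ∀ v i, G' v i = ∑ j, M i j * v j := by
    intro v i
    simp [hG'def, Matrix.mulVecLin_apply, Matrix.mulVec, dotProduct]
  have hG : HasStrictFDerivAt G G' x := by
    apply hasStrictFDerivAt_pi''
    intro i
    by_cases hi : i.1 < c
    · have key := hasStrictFDerivAt_mvpoly (f ⟨i.1, hi⟩) x
      have hfun : (fun y => G y i) = fun y => eval y (f ⟨i.1, hi⟩) := by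
        funext y; simp [hGdef, dif_pos hi]
      have hder : (ContinuousLinearMap.proj i).comp G' = evalDerivCLM (f ⟨i.1, hi⟩) x := by
        ext v
        simp only [ContinuousLinearMap.comp_apply, ContinuousLinearMap.proj_apply,
          evalDerivCLM_apply]
        rw [hG'apply]
        refine Finset.sum_congr rfl fun j _ => ?_
        rw [hMij]; simp [dif_pos hi]
      rw [hfun, hder]
      exact key
    · have key := hasStrictFDerivAt_apply (𝕜 := ℝ) (F' := fun _ : Fin (n+k) => ℝ) ⟨0, h0⟩ x
      have hfun : (fun y => G y i) = fun y : Fin (n+k) → ℝ => y ⟨0, h0⟩ := by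
        funext y; simp [hGdef, dif_neg hi]
      have hder : (ContinuousLinearMap.proj i).comp G' =
          (ContinuousLinearMap.proj ⟨0, h0⟩ : (Fin (n+k) → ℝ) →L[ℝ] ℝ) := by
        ext v
        simp only [ContinuousLinearMap.comp_apply, ContinuousLinearMap.proj_apply]
        rw [hG'apply]
        simp only [hMij, dif_neg hi, ite_mul, one_mul, zero_mul, Finset.sum_ite_eq',
          Finset.mem_univ, if_true]
      rw [hfun, hder]
      exact key
  -- surjectivity of the derivative
  have hrank : M.rank = c + 1 := by
    have h1 := M.rank_le_card_height
    simp only [Fintype.card_fin] at h1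
    omega
  have hsurjL : LinearMap.range M.mulVecLin = ⊤ := by
    apply Submodule.eq_top_of_finrank_eq
    rw [show Module.finrank ℝ ↥(LinearMap.range M.mulVecLin) = M.rank from rfl, hrank]
    simp [Module.finrank_fin_fun]
  have hsurj : LinearMap.range (G' : (Fin (n+k) → ℝ) →ₗ[ℝ] (Fin (c+1) → ℝ)) = ⊤ := by
    rw [LinearMap.range_eq_top] at hsurjL ⊢
    exact hsurjL
  -- x is a zero of the system
  have hxZ : x ∈ Z := by
    rw [hC'] at hx
    exact connectedComponentIn_subset Z z hx
  have hxZ' : ∀ i, eval x (f i) = 0 := by rwa [hZ] at hxZ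
  have hGx : G x = fun i => if i.1 < c then 0 else β := by
    funext i
    by_cases hi : i.1 < c
    · simp only [hGdef, dif_pos hi, if_pos hi]
      exact hxZ' ⟨i.1, hi⟩
    · simp only [hGdef, dif_neg hi, if_neg hi, hx1]
  -- implicit function setup
  set e := hG.implicitToOpenPartialHomeomorph G G' hsurj with he
  set φ := hG.implicitFunction G G' hsurj with hφ
  set η : ℝ → (Fin (c+1) → ℝ) × (LinearMap.ker (G' : (Fin (n+k) → ℝ) →ₗ[ℝ] (Fin (c+1) → ℝ))) :=
    fun t => (fun i => if i.1 < c then 0 else t, 0) with hη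
  have hηcont : Continuous η := by
    apply Continuous.prodMk _ continuous_const
    apply continuous_pi
    intro i
    by_cases hi : i.1 < c <;> simp [hi] <;> fun_prop
  have hηβ : η β = (G x, 0) := by rw [hGx]
  have htend : Filter.Tendsto η (nhds β) (nhds (G x, 0)) := by
    rw [← hηβ]
    exact hηcont.continuousAt
  have hev : ∀ᶠ t in nhds β, G (φ (η t).1 (η t).2) = (η t).1 :=
    htend.eventually (hG.map_implicitFunction_eq hsurj)
  set ψ : ℝ → (Fin (n+k) → ℝ) := fun t => φ (η t).1 (η t).2 with hψ
  have hψe : ∀ t, ψ t = e.symm (η t) := fun t => rfl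
  have hψcontOn : ContinuousOn ψ (η ⁻¹' e.target) := by
    have h1 : ContinuousOn (⇑e.symm) e.target := e.continuousOn_symm
    have := h1.comp hηcont.continuousOn (Set.mapsTo_preimage η e.target)
    exact this
  have hUopen : IsOpen (η ⁻¹' e.target) := e.open_target.preimage hηcont
  have hβU : β ∈ η ⁻¹' e.target := by
    simp only [Set.mem_preimage, hηβ]
    exact hG.mem_implicitToOpenPartialHomeomorph_target hsurj
  -- pick a ball
  have hmem : {t | G (ψ t) = (η t).1} ∩ (η ⁻¹' e.target) ∈ nhds β :=
    Filter.inter_mem hev (hUopen.mem_nhds hβU)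
  obtain ⟨ε, hε, hball⟩ := Metric.mem_nhds_iff.1 hmem
  have hψβ : ψ β = x := by
    have h1 : φ (G x) 0 = x := hG.implicitFunction_apply_image hsurj
    have h2 : ψ β = φ (η β).1 (η β).2 := rfl
    rw [h2, hηβ]
    exact h1
  -- the connected arc of zeros
  set S := ψ '' Metric.ball β ε with hS
  have hSZ : S ⊆ Z := by
    rintro _ ⟨t, ht, rfl⟩
    rw [hZ]
    intro i
    have hGψ : G (ψ t) = (η t).1 := (hball ht).1
    have := congrFun hGψ ⟨i.1, Nat.lt_succ_of_lt i.2⟩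
    simp only [hGdef, hη, dif_pos i.2, if_pos i.2] at this
    simpa using this
  have hxS : x ∈ S := ⟨β, Metric.mem_ball_self hε, hψβ⟩
  have hconn : IsPreconnected S :=
    (convex_ball β ε).isPreconnected.image ψ (hψcontOn.mono (fun t ht => (hball ht).2))
  have hSC' : S ⊆ C' := by
    have h1 : S ⊆ connectedComponentIn Z x := hconn.subset_connectedComponentIn hxS hSZ
    have h2 : connectedComponentIn Z z = connectedComponentIn Z x := by
      apply connectedComponentIn_eq
      rw [← hC']
      exact hx
    rw [hC', h2]
    exact h1
  -- the first coordinate covers a ball around β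
  have hballsub : Metric.ball β ε ⊆ (fun y => y ⟨0, h0⟩) '' C' := by
    intro t ht
    refine ⟨ψ t, hSC' ⟨t, ht, rfl⟩, ?_⟩
    have hGψ : G (ψ t) = (η t).1 := (hball ht).1
    have hcc : ¬ (⟨c, Nat.lt_succ_self c⟩ : Fin (c+1)).1 < c := by simp
    have := congrFun hGψ ⟨c, Nat.lt_succ_self c⟩
    simp only [hGdef, hη, dif_neg hcc, if_neg hcc] at this
    exact this
  -- contradiction with β being a frontier point
  have hint : β ∈ interior ((fun y => y ⟨0, h0⟩) '' C') :=
    mem_interior.2 ⟨Metric.ball β ε, hballsub, Metric.isOpen_ball, Metric.mem_ball_self hε⟩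
  exact hβ.2 hint
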